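/- Let f_1, f_2 : ℝ² → ℝ be convex polynomial functions with f_1(0,0) = f_2(0,0) = 0, let A = {(x, y, z) ∈ ℝ³ : z ≥ f_1(x, y) and z ≥ f_2(x, y)}, and assume A ∩ {(x, y, 0) : (x, y) ∈ ℝ²} = {(0, 0, 0)}. Define A̅_1 = {(x, y, z) : z = f_1(x, y) > f_2(x, y)}, A̅_2 = {(x, y, z) : z = f_2(x, y) > f_1(x, y)}, and for i = 1, 2 define Ψ_i : ℝ² → ℝ² by Ψ_i(x, y) = (x + (∂f_i/∂x)(x, y)·f_i(x, y), y + (∂f_i/∂y)(x, y)·f_i(x, y)). Then: (i) for every (x, y) ∈ ℝ² with f_1(x, y) > f_2(x, y), writing (X, Y) = Ψ_1(x, y), the metric projection P_A(X, Y, 0) belongs to A̅_1; (ii) for every (x, y) ∈ ℝ² with f_2(x, y) > f_1(x, y), writing (X, Y) = Ψ_2(x, y), the metric projection P_A(X, Y, 0) belongs to A̅_2. -/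

import Mathlib

/-- `u` is the metric projection of `p` onto `S`. -/
def IsMetricProj {E : Type*} [NormedAddCommGroup E] (S : Set E) (p u : E) : Prop :=
  u ∈ S ∧ ∀ s ∈ S, ‖u - p‖ ≤ ‖s - p‖

/-- The point (a, b, c) of Euclidean 3-space. -/
noncomputable def e3 (a b c : ℝ) : EuclideanSpace ℝ (Fin 3) :=
  (WithLp.equiv 2 (Fin 3 → ℝ)).symm ![a, b, c]

open MvPolynomial
open MvPolynomial

lemma hasDerivAt_eval_line (f : MvPolynomial (Fin 2) ℝ) (u d : Fin 2 → ℝ) (t : ℝ) :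
    HasDerivAt (fun t : ℝ => MvPolynomial.eval (fun i => u i + t * d i) f)
      (∑ i, d i * MvPolynomial.eval (fun i => u i + t * d i) (pderiv i f)) t := by
  induction f using MvPolynomial.induction_on with
  | C a => simpa using hasDerivAt_const t a
  | add p q hp hq =>
      simpa [map_add, mul_add, Finset.sum_add_distrib, Pi.add_def] using hp.add hq
  | mul_X p n hp =>
      have hx : HasDerivAt (fun t : ℝ => u n + t * d n) (d n) t := by
        simpa [mul_comm] using ((hasDerivAt_id t).const_mul (d n)).const_add (u n)
      have := (hp.mul hx : HasDerivAt
        (fun t : ℝ => MvPolynomial.eval (fun i => u i + t * d i) p * (u n + t * d n)) _ t)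
      have heq : (fun t : ℝ => MvPolynomial.eval (fun i => u i + t * d i) (p * X n))
          = fun t : ℝ => MvPolynomial.eval (fun i => u i + t * d i) p * (u n + t * d n) := by
        funext s; simp [eval_mul]
      rw [heq]
      refine this.congr_deriv ?_
      fin_cases n <;>
        simp [pderiv_mul, pderiv_X, Fin.sum_univ_two, Pi.single, Pi.mul_def] <;> ring

lemma grad_le (f : MvPolynomial (Fin 2) ℝ)
    (hconv : ConvexOn ℝ Set.univ (fun v : Fin 2 → ℝ => MvPolynomial.eval v f))
    (u v : Fin 2 → ℝ) :
    MvPolynomial.eval u f + ∑ i, (v i - u i) * MvPolynomial.eval u (pderiv i f)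
      ≤ MvPolynomial.eval v f := by
  set g : ℝ → ℝ := fun t => MvPolynomial.eval (fun i => u i + t * (v i - u i)) f with hg
  have hgconv : ConvexOn ℝ Set.univ g := by
    have h := hconv.comp_affineMap (AffineMap.lineMap u v : ℝ →ᵃ[ℝ] (Fin 2 → ℝ))
    have heq : g = (fun w : Fin 2 → ℝ => MvPolynomial.eval w f) ∘
        (AffineMap.lineMap u v : ℝ →ᵃ[ℝ] (Fin 2 → ℝ)) := by
      funext t
      simp only [Function.comp_apply, hg]
      have : (fun i => u i + t * (v i - u i)) = (AffineMap.lineMap u v) t := by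
        funext i; simp [AffineMap.lineMap_apply]; ring
      rw [this]
    rw [heq]
    simpa using h
  have hd : HasDerivAt g (∑ i, (v i - u i) * MvPolynomial.eval u (pderiv i f)) 0 := by
    have := hasDerivAt_eval_line f u (fun i => v i - u i) 0
    simpa using this
  have hs := hgconv.le_slope_of_hasDerivAt (Set.mem_univ 0) (Set.mem_univ 1) one_pos hd
  have hg0 : g 0 = MvPolynomial.eval u f := by simp [hg]
  have hg1 : g 1 = MvPolynomial.eval v f := by
    simp only [hg]
    have : (fun i => u i + 1 * (v i - u i)) = v := by funext i; ring
    rw [this]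
  rw [slope_def_field, hg0, hg1] at hs
  simp only [div_eq_mul_inv] at hs
  linarith [hs]

@[simp] lemma e3_zero (a b c : ℝ) : e3 a b c 0 = a := rfl
@[simp] lemma e3_one (a b c : ℝ) : e3 a b c 1 = b := rfl
@[simp] lemma e3_two (a b c : ℝ) : e3 a b c 2 = c := rfl

lemma isMetricProj_eq {E : Type*} [NormedAddCommGroup E] [InnerProductSpace ℝ E]
    {S : Set E} {p q w : E} (hq : q ∈ S)
    (hvar : ∀ s ∈ S, inner ℝ (s - q) (p - q) ≤ (0 : ℝ))
    (hw : IsMetricProj S p w) : w = q := by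
  obtain ⟨hwS, hwmin⟩ := hw
  have h1 : ‖w - p‖ ≤ ‖q - p‖ := hwmin q hq
  have h2 : inner ℝ (w - q) (p - q) ≤ (0 : ℝ) := hvar w hwS
  have hexp : ‖w - p‖ ^ 2 = ‖w - q‖ ^ 2 - 2 * inner ℝ (w - q) (p - q) + ‖q - p‖ ^ 2 := by
    have h : w - p = (w - q) - (p - q) := by abel
    rw [h, norm_sub_sq_real, norm_sub_rev p q]
  have h4 : ‖w - q‖ ^ 2 ≤ 0 := by nlinarith [norm_nonneg (w - p), norm_nonneg (q - p)]
  have h5 : ‖w - q‖ = 0 := by nlinarith [norm_nonneg (w - q)]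
  rwa [norm_sub_eq_zero_iff] at h5

lemma inner3 (a b : EuclideanSpace ℝ (Fin 3)) :
    (inner ℝ a b : ℝ) = a 0 * b 0 + a 1 * b 1 + a 2 * b 2 := by
  simp [PiLp.inner_apply, Fin.sum_univ_three, RCLike.inner_apply]; ring

lemma main_aux (f g : MvPolynomial (Fin 2) ℝ)
    (hconvf : ConvexOn ℝ Set.univ (fun v : Fin 2 → ℝ => MvPolynomial.eval v f))
    (hf0 : MvPolynomial.eval (0 : Fin 2 → ℝ) f = 0)
    (hg0 : MvPolynomial.eval (0 : Fin 2 → ℝ) g = 0)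
    (hsingle : {p : EuclideanSpace ℝ (Fin 3) | MvPolynomial.eval ![p 0, p 1] f ≤ p 2 ∧
        MvPolynomial.eval ![p 0, p 1] g ≤ p 2} ∩ {p : EuclideanSpace ℝ (Fin 3) | p 2 = 0} = {0})
    (x y : ℝ) (hlt : MvPolynomial.eval ![x, y] g < MvPolynomial.eval ![x, y] f)
    (w : EuclideanSpace ℝ (Fin 3))
    (hw : IsMetricProj {p : EuclideanSpace ℝ (Fin 3) | MvPolynomial.eval ![p 0, p 1] f ≤ p 2 ∧
        MvPolynomial.eval ![p 0, p 1] g ≤ p 2}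
      (e3 (x + MvPolynomial.eval ![x, y] (pderiv 0 f) * MvPolynomial.eval ![x, y] f)
           (y + MvPolynomial.eval ![x, y] (pderiv 1 f) * MvPolynomial.eval ![x, y] f) 0) w) :
    w 2 = MvPolynomial.eval ![w 0, w 1] f ∧
      MvPolynomial.eval ![w 0, w 1] g < MvPolynomial.eval ![w 0, w 1] f := by
  set z : ℝ := MvPolynomial.eval ![x, y] f with hz
  set D0 : ℝ := MvPolynomial.eval ![x, y] (pderiv 0 f) with hD0
  set D1 : ℝ := MvPolynomial.eval ![x, y] (pderiv 1 f) with hD1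
  -- z > 0
  have hzpos : 0 < z := by
    by_contra h
    push_neg at h
    have hmem : e3 x y 0 ∈ ({p : EuclideanSpace ℝ (Fin 3) |
        MvPolynomial.eval ![p 0, p 1] f ≤ p 2 ∧ MvPolynomial.eval ![p 0, p 1] g ≤ p 2} ∩
        {p : EuclideanSpace ℝ (Fin 3) | p 2 = 0}) := by
      constructor
      · constructor
        · simpa using h
        · simp only [Set.mem_setOf_eq, e3_zero, e3_one, e3_two]
          exact le_trans hlt.le h
      · rfl
    rw [hsingle] at hmem
    have hx0 : x = 0 := by
      have := congrFun (congrArg (fun (v : EuclideanSpace ℝ (Fin 3)) (i : Fin 3) => v i) hmem) 0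
      simpa using this
    have hy0 : y = 0 := by
      have := congrFun (congrArg (fun (v : EuclideanSpace ℝ (Fin 3)) (i : Fin 3) => v i) hmem) 1
      simpa using this
    have h00 : (![x, y] : Fin 2 → ℝ) = 0 := by
      funext i; fin_cases i <;> simp [hx0, hy0]
    rw [h00, hg0] at hlt
    exact absurd hlt (not_lt.mpr h)
  set q : EuclideanSpace ℝ (Fin 3) := e3 x y z with hq
  have hqS : q ∈ {p : EuclideanSpace ℝ (Fin 3) | MvPolynomial.eval ![p 0, p 1] f ≤ p 2 ∧
      MvPolynomial.eval ![p 0, p 1] g ≤ p 2} := by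
    constructor <;> simp only [hq, e3_zero, e3_one, e3_two]
    · exact le_refl _
    · exact hlt.le
  have hvar : ∀ s ∈ {p : EuclideanSpace ℝ (Fin 3) | MvPolynomial.eval ![p 0, p 1] f ≤ p 2 ∧
      MvPolynomial.eval ![p 0, p 1] g ≤ p 2},
      (inner ℝ (s - q) (e3 (x + D0 * z) (y + D1 * z) 0 - q) : ℝ) ≤ 0 := by
    intro s hs
    obtain ⟨hs1, _⟩ := hs
    have hgrad := grad_le f hconvf ![x, y] ![s 0, s 1]
    simp only [Fin.sum_univ_two] at hgrad
    have hgrad' : z + (s 0 - x) * D0 + (s 1 - y) * D1 ≤ s 2 := by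
      refine le_trans ?_ hs1
      calc z + (s 0 - x) * D0 + (s 1 - y) * D1
          = MvPolynomial.eval ![x, y] f +
            ((![s 0, s 1] 0 - ![x, y] 0) * MvPolynomial.eval ![x, y] (pderiv 0 f) +
             (![s 0, s 1] 1 - ![x, y] 1) * MvPolynomial.eval ![x, y] (pderiv 1 f)) := by
            simp; ring
        _ ≤ MvPolynomial.eval ![s 0, s 1] f := by linarith [hgrad]
    rw [inner3]
    simp only [PiLp.sub_apply, hq, e3_zero, e3_one, e3_two]
    nlinarith [hgrad', hzpos]
  have hwq : w = q := isMetricProj_eq hqS hvar hw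
  rw [hwq]
  constructor
  · simp [hq, hz]
  · simpa [hq] using hlt

theorem stmt12 (f₁ f₂ : MvPolynomial (Fin 2) ℝ)
    (hconv₁ : ConvexOn ℝ Set.univ (fun v : Fin 2 → ℝ => MvPolynomial.eval v f₁))
    (hconv₂ : ConvexOn ℝ Set.univ (fun v : Fin 2 → ℝ => MvPolynomial.eval v f₂))
    (h₁0 : MvPolynomial.eval (0 : Fin 2 → ℝ) f₁ = 0)
    (h₂0 : MvPolynomial.eval (0 : Fin 2 → ℝ) f₂ = 0)
    (A : Set (EuclideanSpace ℝ (Fin 3)))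
    (hA : A = {p | MvPolynomial.eval ![p 0, p 1] f₁ ≤ p 2 ∧
                   MvPolynomial.eval ![p 0, p 1] f₂ ≤ p 2})
    (hsingle : A ∩ {p : EuclideanSpace ℝ (Fin 3) | p 2 = 0} = {0})
    (A₁ A₂ : Set (EuclideanSpace ℝ (Fin 3)))
    (hA₁ : A₁ = {p | p 2 = MvPolynomial.eval ![p 0, p 1] f₁ ∧
                     MvPolynomial.eval ![p 0, p 1] f₂ < MvPolynomial.eval ![p 0, p 1] f₁})
    (hA₂ : A₂ = {p | p 2 = MvPolynomial.eval ![p 0, p 1] f₂ ∧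
                     MvPolynomial.eval ![p 0, p 1] f₁ < MvPolynomial.eval ![p 0, p 1] f₂}) :
    (∀ x y : ℝ, MvPolynomial.eval ![x, y] f₂ < MvPolynomial.eval ![x, y] f₁ →
      ∀ w, IsMetricProj A
        (e3 (x + MvPolynomial.eval ![x, y] (MvPolynomial.pderiv 0 f₁) *
              MvPolynomial.eval ![x, y] f₁)
            (y + MvPolynomial.eval ![x, y] (MvPolynomial.pderiv 1 f₁) *
              MvPolynomial.eval ![x, y] f₁)
            0) w → w ∈ A₁) ∧
    (∀ x y : ℝ, MvPolynomial.eval ![x, y] f₁ < MvPolynomial.eval ![x, y] f₂ →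
      ∀ w, IsMetricProj A
        (e3 (x + MvPolynomial.eval ![x, y] (MvPolynomial.pderiv 0 f₂) *
              MvPolynomial.eval ![x, y] f₂)
            (y + MvPolynomial.eval ![x, y] (MvPolynomial.pderiv 1 f₂) *
              MvPolynomial.eval ![x, y] f₂)
            0) w → w ∈ A₂) := by
  constructor
  · intro x y hlt w hw
    rw [hA] at hsingle hw
    rw [hA₁]
    exact main_aux f₁ f₂ hconv₁ h₁0 h₂0 hsingle x y hlt w hw
  · intro x y hlt w hw
    have hAswap : A = {p : EuclideanSpace ℝ (Fin 3) |
        MvPolynomial.eval ![p 0, p 1] f₂ ≤ p 2 ∧ MvPolynomial.eval ![p 0, p 1] f₁ ≤ p 2} := by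
      rw [hA]; ext p; exact and_comm
    rw [hAswap] at hsingle hw
    rw [hA₂]
    exact main_aux f₂ f₁ hconv₂ h₂0 h₁0 hsingle x y hlt w hw
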